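/- Ostrowski's theorem on limit sets (as stated and used in the proof of Theorem 3): let (x^k)_{k≥0} be a bounded sequence in a finite-dimensional real normed vector space such that ‖x^{k+1} − x^k‖ → 0 as k → ∞. Then the set of cluster points of (x^k) is nonempty, compact, and connected. -/

import Mathlib

open Filter Topology Metric

/-- Ostrowski's theorem on limit sets: for a bounded sequence `(x^k)` in a finite-dimensional
real normed vector space with `‖x^{k+1} - x^k‖ → 0`, the set of cluster points of `(x^k)` is
nonempty, compact, and connected. -/
theorem ostrowski_limit_set {X : Type*}
    [NormedAddCommGroup X] [NormedSpace ℝ X] [FiniteDimensional ℝ X]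
    (x : ℕ → X) (hbd : ∃ C, ∀ k, ‖x k‖ ≤ C)
    (hstep : Tendsto (fun k => ‖x (k + 1) - x k‖) atTop (𝓝 0)) :
    {p | MapClusterPt p atTop x}.Nonempty ∧
    IsCompact {p | MapClusterPt p atTop x} ∧
    IsConnected {p | MapClusterPt p atTop x} := by
  obtain ⟨C, hC⟩ := hbd
  set L := {p | MapClusterPt p atTop x} with hLdef
  have hmem : ∀ k, x k ∈ closedBall (0 : X) C := fun k => by
    simpa [mem_closedBall, dist_eq_norm] using hC k
  have hLclosed : IsClosed L := isClosed_setOf_clusterPt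
  -- limits of subsequences are cluster points
  have cluster_of_sub : ∀ (φ : ℕ → ℕ) (p : X), StrictMono φ →
      Tendsto (x ∘ φ) atTop (𝓝 p) → p ∈ L := fun φ p hφ h =>
    MapClusterPt.of_comp hφ.tendsto_atTop h.mapClusterPt
  -- nonempty
  obtain ⟨p₀, -, φ₀, hφ₀, hlim₀⟩ := tendsto_subseq_of_bounded isBounded_closedBall hmem
  have hne : L.Nonempty := ⟨p₀, cluster_of_sub φ₀ p₀ hφ₀ hlim₀⟩
  -- bounded, hence compact
  have hLsub : L ⊆ closedBall (0 : X) C := by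
    intro p hp
    have h1 : p ∈ closure (Set.range x) := by
      rw [mem_closure_iff_clusterPt]
      exact hp.clusterPt.mono (le_principal_iff.2 (range_mem_map))
    have h2 : closure (Set.range x) ⊆ closedBall (0 : X) C :=
      closure_minimal (Set.range_subset_iff.2 hmem) isClosed_closedBall
    exact h2 h1
  have hLcomp : IsCompact L :=
    (isCompact_closedBall (0 : X) C).of_isClosed_subset hLclosed hLsub
  -- infDist (x k) L tends to 0
  have hinf : ∀ ε > 0, ∀ᶠ k in atTop, infDist (x k) L < ε := by
    intro ε hε
    by_contra h
    rw [not_eventually] at h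
    obtain ⟨φ, hφ, hφP⟩ := extraction_of_frequently_atTop h
    obtain ⟨p, -, ψ, hψ, hlim⟩ :=
      tendsto_subseq_of_bounded isBounded_closedBall (fun n => hmem (φ n))
    have hpL : p ∈ L := cluster_of_sub (φ ∘ ψ) p (hφ.comp hψ) hlim
    have htends : Tendsto (fun n => infDist ((x ∘ φ ∘ ψ) n) L) atTop (𝓝 (infDist p L)) :=
      ((continuous_infDist_pt L).tendsto p).comp hlim
    have hge : ε ≤ infDist p L :=
      ge_of_tendsto htends (Eventually.of_forall fun n => le_of_not_gt (hφP (ψ n)))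
    rw [infDist_zero_of_mem hpL] at hge
    linarith
  refine ⟨hne, hLcomp, hne, ?_⟩
  rw [isPreconnected_iff_subset_of_fully_disjoint_closed hLclosed]
  intro u v hu hv hsub hdisj
  by_contra hcon
  push_neg at hcon
  obtain ⟨hnu, hnv⟩ := hcon
  set A := L ∩ u with hAdef
  set B := L ∩ v with hBdef
  have hAne : A.Nonempty := by
    obtain ⟨p, hpL, hpv⟩ := Set.not_subset.1 hnv
    exact ⟨p, hpL, (hsub hpL).resolve_right hpv⟩
  have hBne : B.Nonempty := by
    obtain ⟨p, hpL, hpu⟩ := Set.not_subset.1 hnu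
    exact ⟨p, hpL, (hsub hpL).resolve_left hpu⟩
  have hAcomp : IsCompact A := hLcomp.inter_right hu
  have hBcomp : IsCompact B := hLcomp.inter_right hv
  have hABdisj : Disjoint A B :=
    hdisj.mono Set.inter_subset_right Set.inter_subset_right
  -- positive distance between A and B
  obtain ⟨a₀, ha₀A, ha₀min⟩ :=
    hAcomp.exists_isMinOn hAne (continuous_infDist_pt B).continuousOn
  set δ := infDist a₀ B with hδdef
  have ha₀B : a₀ ∉ B := fun h => hABdisj.ne_of_mem ha₀A h rfl
  have hδpos : 0 < δ := (hBcomp.isClosed.notMem_iff_infDist_pos hBne).1 ha₀B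
  have hABdist : ∀ a ∈ A, ∀ b ∈ B, δ ≤ dist a b := fun a ha b hb =>
    le_trans (isMinOn_iff.1 ha₀min a ha) (infDist_le_dist_of_mem hb)
  -- find N past which steps are small and x k is near L
  have hev1 : ∀ᶠ k in atTop, ‖x (k + 1) - x k‖ < δ / 3 :=
    hstep.eventually_lt_const (by linarith)
  have hev2 : ∀ᶠ k in atTop, infDist (x k) L < δ / 3 := hinf _ (by linarith)
  obtain ⟨N, hN⟩ := eventually_atTop.1 (hev1.and hev2)
  -- classification: every late point is near A or near B
  have hclass : ∀ k, N ≤ k →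
      (∃ a ∈ A, dist (x k) a < δ / 3) ∨ (∃ b ∈ B, dist (x k) b < δ / 3) := by
    intro k hk
    obtain ⟨p, hpL, hp⟩ := (infDist_lt_iff hne).1 (hN k hk).2
    rcases hsub hpL with hpu | hpv
    · exact Or.inl ⟨p, ⟨hpL, hpu⟩, hp⟩
    · exact Or.inr ⟨p, ⟨hpL, hpv⟩, hp⟩
  -- main symmetric argument
  have main : ∀ S T : Set X, T.Nonempty → T ⊆ L →
      (∀ a ∈ S, ∀ b ∈ T, δ ≤ dist a b) →
      (∀ k, N ≤ k → (∃ a ∈ S, dist (x k) a < δ / 3) ∨ (∃ b ∈ T, dist (x k) b < δ / 3)) →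
      (∃ a ∈ S, dist (x N) a < δ / 3) → False := by
    intro S T hTne hTL hdistST hcl hNnear
    have ind : ∀ m, ∃ a ∈ S, dist (x (N + m)) a < δ / 3 := by
      intro m
      induction m with
      | zero => exact hNnear
      | succ m ih =>
        rcases hcl (N + m + 1) (by omega) with h | h
        · exact h
        · exfalso
          obtain ⟨a, haS, ha⟩ := ih
          obtain ⟨b, hbT, hb⟩ := h
          have h1 : δ ≤ dist a b := hdistST a haS b hbT
          have h2 : ‖x (N + m + 1) - x (N + m)‖ < δ / 3 := (hN (N + m) (by omega)).1
          have h3 : dist a b ≤ dist a (x (N + m)) + dist (x (N + m)) (x (N + m + 1))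
              + dist (x (N + m + 1)) b := dist_triangle4 _ _ _ _
          rw [dist_comm a (x (N + m))] at h3
          rw [← dist_eq_norm'] at h2
          linarith [h3, ha, hb, h1, h2]
    obtain ⟨b₀, hb₀⟩ := hTne
    have hfreq : ∃ᶠ k in atTop, x k ∈ ball b₀ (δ / 3) :=
      mapClusterPt_iff_frequently.1 (hTL hb₀) _ (ball_mem_nhds _ (by linarith))
    obtain ⟨k, hkball, hk⟩ := (hfreq.and_eventually (eventually_ge_atTop N)).exists
    obtain ⟨a, haS, ha⟩ := ind (k - N)
    rw [show N + (k - N) = k by omega] at ha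
    have h1 : δ ≤ dist a b₀ := hdistST a haS b₀ hb₀
    have h2 : dist a b₀ ≤ dist a (x k) + dist (x k) b₀ := dist_triangle _ _ _
    rw [dist_comm a (x k)] at h2
    rw [mem_ball] at hkball
    linarith
  rcases hclass N le_rfl with hnear | hnear
  · exact main A B hBne Set.inter_subset_left hABdist hclass hnear
  · exact main B A hAne Set.inter_subset_left
      (fun b hb a ha => by rw [dist_comm]; exact hABdist a ha b hb)
      (fun k hk => (hclass k hk).symm) hnear
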